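/- Let λ_0 ∈ (0, ∞] and let φ : ℝ → [0, ∞] be an even function, finite on (-λ_0, λ_0), with φ(0) = 0, such that the map x ↦ φ(√x) is convex on [0, ∞). Let ξ, ξ_1, ξ_2, … be independent identically distributed real centered random variables and define the B(φ)-norm ‖η‖_{B(φ)} := inf{ τ ≥ 0 : for all λ ∈ (-λ_0, λ_0), E exp(λ η) ≤ exp(φ(λ τ)) } (with inf ∅ = ∞). If ‖ξ_1‖_{B(φ)} < ∞, then sup_{n ≥ 1} ‖ n^{-1/2} ∑_{i=1}^n ξ_i ‖_{B(φ)} = ‖ξ_1‖_{B(φ)}. -/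

import Mathlib

open MeasureTheory ProbabilityTheory Real ENNReal

/-- The exponential function on `[0, ∞]`, with `exp ∞ = ∞`. -/
noncomputable def eexp (x : ℝ≥0∞) : ℝ≥0∞ :=
  if x = ∞ then ∞ else ENNReal.ofReal (Real.exp x.toReal)

lemma eexp_mono {a b : ℝ≥0∞} (h : a ≤ b) : eexp a ≤ eexp b := by
  unfold eexp
  rcases eq_or_ne b ∞ with hb | hb
  · simp [hb]
  · have ha : a ≠ ∞ := fun h' => hb (top_le_iff.mp (h' ▸ h))
    simp only [ha, hb, if_false]
    exact ENNReal.ofReal_le_ofReal (Real.exp_le_exp.2 (ENNReal.toReal_mono hb h))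

lemma eexp_pow (a : ℝ≥0∞) (n : ℕ) (hn : 1 ≤ n) : (eexp a) ^ n = eexp (n * a) := by
  rcases eq_or_ne a ∞ with ha | ha
  · have hn0 : (n : ℝ≥0∞) ≠ 0 := by exact_mod_cast (Nat.one_le_iff_ne_zero.mp hn)
    simp [eexp, ha, ENNReal.mul_top hn0, ENNReal.top_pow (Nat.one_le_iff_ne_zero.mp hn), Nat.one_le_iff_ne_zero.mp hn]
  · have hna : (n : ℝ≥0∞) * a ≠ ∞ := ENNReal.mul_ne_top (ENNReal.natCast_ne_top n) ha
    simp only [eexp, ha, hna, if_false]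
    rw [← ENNReal.ofReal_pow (Real.exp_nonneg _), ← Real.exp_nat_mul]
    congr 1
    rw [ENNReal.toReal_mul, ENNReal.toReal_natCast]

lemma lintegral_exp_sum {Ω : Type*} [MeasurableSpace Ω] {μ : Measure Ω} [IsProbabilityMeasure μ]
    {ξ : ℕ → Ω → ℝ} (hmeas : ∀ i, Measurable (ξ i))
    (hIndep : iIndepFun ξ μ) (l : ℝ) (s : Finset ℕ) :
    ∫⁻ ω, ENNReal.ofReal (Real.exp (l * ∑ i ∈ s, ξ i ω)) ∂μ
      = ∏ i ∈ s, ∫⁻ ω, ENNReal.ofReal (Real.exp (l * ξ i ω)) ∂μ := by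
  classical
  induction s using Finset.induction_on with
  | empty => simp
  | insert _ _ hi ih =>
    rename_i i s
    have hu : Measurable (fun x : ℝ => ENNReal.ofReal (Real.exp (l * x))) :=
      ((measurable_id.const_mul l).exp).ennreal_ofReal
    have hsum : Measurable (fun ω => ∑ j ∈ s, ξ j ω) :=
      Finset.measurable_sum s fun j _ => hmeas j
    have hind : IndepFun (fun ω => ENNReal.ofReal (Real.exp (l * ξ i ω)))
        (fun ω => ENNReal.ofReal (Real.exp (l * ∑ j ∈ s, ξ j ω))) μ := by
      have h2 := ((hIndep.indepFun_finsetSum_of_notMem hmeas hi).symm).comp hu hu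
      simpa [Function.comp_def] using h2
    have key := lintegral_mul_eq_lintegral_mul_lintegral_of_indepFun
      (f := fun ω => ENNReal.ofReal (Real.exp (l * ξ i ω)))
      (g := fun ω => ENNReal.ofReal (Real.exp (l * ∑ j ∈ s, ξ j ω)))
      (hu.comp (hmeas i)) (hu.comp hsum) hind
    rw [Finset.prod_insert hi, ← ih]
    rw [show (fun ω => ENNReal.ofReal (Real.exp (l * ξ i ω))) * (fun ω => ENNReal.ofReal (Real.exp (l * ∑ j ∈ s, ξ j ω))) = fun ω => ENNReal.ofReal (Real.exp (l * ξ i ω)) * ENNReal.ofReal (Real.exp (l * ∑ j ∈ s, ξ j ω)) from rfl] at key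
    rw [← key]
    apply lintegral_congr; intro ω
    rw [Finset.sum_insert hi, mul_add, Real.exp_add, ENNReal.ofReal_mul (Real.exp_nonneg _)]

lemma key_conv {φ : ℝ → ℝ≥0∞} (hφeven : ∀ x : ℝ, φ (-x) = φ x) (hφ0 : φ 0 = 0)
    (hφconv : ∀ x y t : ℝ, 0 ≤ x → 0 ≤ y → 0 ≤ t → t ≤ 1 →
      φ (Real.sqrt (t * x + (1 - t) * y))
        ≤ ENNReal.ofReal t * φ (Real.sqrt x) + ENNReal.ofReal (1 - t) * φ (Real.sqrt y))
    (t : ℝ) (n : ℕ) (hn : 1 ≤ n) :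
    (n : ℝ≥0∞) * φ (t / Real.sqrt n) ≤ φ t := by
  have hnpos : (0:ℝ) < n := by exact_mod_cast hn
  have habs : ∀ x : ℝ, φ |x| = φ x := by
    intro x
    rcases abs_cases x with ⟨h, _⟩ | ⟨h, _⟩
    · rw [h]
    · rw [h, hφeven]
  have h := hφconv (t ^ 2) 0 (1 / n) (sq_nonneg t) le_rfl (by positivity)
    (by rw [div_le_one hnpos]; exact_mod_cast hn)
  rw [mul_zero, add_zero, Real.sqrt_zero, hφ0, mul_zero, add_zero] at h
  have h1 : (1 / (n:ℝ)) * t ^ 2 = (t / Real.sqrt n) ^ 2 := by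
    rw [div_pow, Real.sq_sqrt hnpos.le]
    ring
  rw [h1, Real.sqrt_sq_eq_abs, Real.sqrt_sq_eq_abs, habs, habs] at h
  calc (n : ℝ≥0∞) * φ (t / Real.sqrt n) ≤ (n : ℝ≥0∞) * (ENNReal.ofReal (1 / n) * φ t) :=
        mul_le_mul_right h _
    _ = ((n : ℝ≥0∞) * ENNReal.ofReal (1 / n)) * φ t := by rw [mul_assoc]
    _ = φ t := by
        rw [← ENNReal.ofReal_natCast n, ← ENNReal.ofReal_mul (by positivity),
          mul_one_div_cancel hnpos.ne', ENNReal.ofReal_one, one_mul]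

/-- The `B(φ)`-norm of a random variable `η`:
`inf { τ ≥ 0 : ∀ λ ∈ (-λ₀, λ₀), E exp(λ η) ≤ exp(φ(λ τ)) }`. -/
noncomputable def BphiNorm {Ω : Type*} [MeasurableSpace Ω] (μ : Measure Ω)
    (φ : ℝ → ℝ≥0∞) (lambda0 : ℝ≥0∞) (η : Ω → ℝ) : ℝ :=
  sInf {τ : ℝ | 0 ≤ τ ∧ ∀ l : ℝ, ENNReal.ofReal |l| < lambda0 →
    ∫⁻ ω, ENNReal.ofReal (Real.exp (l * η ω)) ∂μ ≤ eexp (φ (l * τ))}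

/-- Identity (1.9): for i.i.d. centered random variables `ξ_i` with finite
`B(φ)`-norm, where `φ` is even, vanishes at `0`, is finite on `(-λ₀, λ₀)` and
`x ↦ φ(√x)` is convex on `[0, ∞)`, the supremum over `n ≥ 1` of the `B(φ)`-norms
of the normalized sums `n^{-1/2} ∑_{i=1}^n ξ_i` equals `‖ξ_1‖_{B(φ)}`. -/
theorem sup_BphiNorm_normalized_sums
    {Ω : Type*} [MeasurableSpace Ω] {μ : Measure Ω} [IsProbabilityMeasure μ]
    {lambda0 : ℝ≥0∞} (hl : 0 < lambda0)
    {φ : ℝ → ℝ≥0∞} (hφeven : ∀ x : ℝ, φ (-x) = φ x) (hφ0 : φ 0 = 0)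
    (hφfin : ∀ x : ℝ, ENNReal.ofReal |x| < lambda0 → φ x ≠ ∞)
    (hφconv : ∀ x y t : ℝ, 0 ≤ x → 0 ≤ y → 0 ≤ t → t ≤ 1 →
      φ (Real.sqrt (t * x + (1 - t) * y))
        ≤ ENNReal.ofReal t * φ (Real.sqrt x) + ENNReal.ofReal (1 - t) * φ (Real.sqrt y))
    {ξ : ℕ → Ω → ℝ} (hmeas : ∀ i, Measurable (ξ i))
    (hIndep : iIndepFun ξ μ)
    (hid : ∀ i, IdentDistrib (ξ i) (ξ 0) μ μ)
    (hcent : ∫ ω, ξ 0 ω ∂μ = 0)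
    (hfin : ∃ τ : ℝ, 0 ≤ τ ∧ ∀ l : ℝ, ENNReal.ofReal |l| < lambda0 →
      ∫⁻ ω, ENNReal.ofReal (Real.exp (l * ξ 0 ω)) ∂μ ≤ eexp (φ (l * τ))) :
    IsLUB {r : ℝ | ∃ n : ℕ, 1 ≤ n ∧
        r = BphiNorm μ φ lambda0
          (fun ω => (n : ℝ) ^ (-(1 : ℝ) / 2) * ∑ i ∈ Finset.range n, ξ i ω)}
      (BphiNorm μ φ lambda0 (ξ 0)) := by
  classical
  have hub : ∀ n : ℕ, 1 ≤ n →
      BphiNorm μ φ lambda0 (fun ω => (n : ℝ) ^ (-(1:ℝ)/2) * ∑ i ∈ Finset.range n, ξ i ω)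
        ≤ BphiNorm μ φ lambda0 (ξ 0) := by
    intro n hn
    apply csInf_le_csInf
    · exact ⟨0, fun x hx => hx.1⟩
    · exact hfin
    · rintro τ ⟨hτ0, hτl⟩
      refine ⟨hτ0, ?_⟩
      intro l hlt
      have hnpos : (0:ℝ) < n := by exact_mod_cast hn
      have hsqrt : (0:ℝ) < Real.sqrt n := Real.sqrt_pos.mpr hnpos
      set c : ℝ := (n : ℝ) ^ (-(1:ℝ)/2) with hc
      have hcval : c = (Real.sqrt n)⁻¹ := by
        rw [hc, show (-(1:ℝ)/2) = -(1/2) by ring, Real.rpow_neg hnpos.le,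
          ← Real.sqrt_eq_rpow]
      have hcpos : 0 < c := by rw [hcval]; positivity
      have hcle : c ≤ 1 := by
        rw [hcval]
        have h1 : (1:ℝ) ≤ Real.sqrt n := by
          rw [show (1:ℝ) = Real.sqrt 1 from (Real.sqrt_one).symm]
          exact Real.sqrt_le_sqrt (by exact_mod_cast hn)
        exact inv_le_one_of_one_le₀ h1
      set l' : ℝ := l * c with hl'
      have hl'abs : |l'| ≤ |l| := by
        rw [hl', abs_mul, abs_of_pos hcpos]
        calc |l| * c ≤ |l| * 1 := by
              exact mul_le_mul_of_nonneg_left hcle (abs_nonneg l)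
          _ = |l| := mul_one _
      have hl't : ENNReal.ofReal |l'| < lambda0 :=
        lt_of_le_of_lt (ENNReal.ofReal_le_ofReal hl'abs) hlt
      have hu' : Measurable (fun x : ℝ => ENNReal.ofReal (Real.exp (l' * x))) :=
        ((measurable_id.const_mul l').exp).ennreal_ofReal
      calc ∫⁻ ω, ENNReal.ofReal (Real.exp (l * (c * ∑ i ∈ Finset.range n, ξ i ω))) ∂μ
          = ∫⁻ ω, ENNReal.ofReal (Real.exp (l' * ∑ i ∈ Finset.range n, ξ i ω)) ∂μ := by
            apply lintegral_congr; intro ω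
            rw [show l * (c * ∑ i ∈ Finset.range n, ξ i ω)
              = l' * ∑ i ∈ Finset.range n, ξ i ω by rw [hl']; ring]
        _ = ∏ i ∈ Finset.range n, ∫⁻ ω, ENNReal.ofReal (Real.exp (l' * ξ i ω)) ∂μ :=
            lintegral_exp_sum hmeas hIndep l' (Finset.range n)
        _ = (∫⁻ ω, ENNReal.ofReal (Real.exp (l' * ξ 0 ω)) ∂μ) ^ n := by
            have hfac : ∀ i, ∫⁻ ω, ENNReal.ofReal (Real.exp (l' * ξ i ω)) ∂μ
                = ∫⁻ ω, ENNReal.ofReal (Real.exp (l' * ξ 0 ω)) ∂μ :=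
              fun i => ((hid i).comp hu').lintegral_eq
            simp_rw [hfac]
            rw [Finset.prod_const, Finset.card_range]
        _ ≤ (eexp (φ (l' * τ))) ^ n := pow_le_pow_left₀ zero_le (hτl l' hl't) n
        _ = eexp ((n:ℝ≥0∞) * φ (l' * τ)) := eexp_pow _ n hn
        _ ≤ eexp (φ (l * τ)) := by
            apply eexp_mono
            have hk := key_conv hφeven hφ0 hφconv (l * τ) n hn
            have h3 : l' * τ = (l * τ) / Real.sqrt n := by
              rw [hl', hcval]; ring
            rw [h3]; exact hk
  have h1 : (fun ω => ((1:ℕ) : ℝ) ^ (-(1:ℝ)/2) * ∑ i ∈ Finset.range 1, ξ i ω) = ξ 0 := by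
    funext ω
    simp [Real.one_rpow]
  constructor
  · rintro r ⟨n, hn, rfl⟩
    exact hub n hn
  · intro b hb
    exact hb ⟨1, le_refl 1, by rw [h1]⟩
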